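/- Let o, p, r, r' be points in ℝ² with r, r', p distinct from o, such that |or| = |or'|, the angle ∠r'or is at most π/6, and the angle ∠r'op equals π/2. Then |r'p| > |rp|/2. -/
import Mathlib


open EuclideanGeometry Real

noncomputable section

/-- Points of the Euclidean plane. -/
abbrev Pt : Type := EuclideanSpace ℝ (Fin 2)

/-- If `|or| = |or'|`, `∠r'or ≤ π/6` and `∠r'op = π/2` (with
`r, r', p ≠ o`), then `|r'p| > |rp|/2`. -/
theorem stmt5 (o p r r' : Pt) (hr : r ≠ o) (hr' : r' ≠ o) (hp : p ≠ o)
    (hlen : dist o r = dist o r')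
    (hangle₁ : ∠ r' o r ≤ π / 6)
    (hangle₂ : ∠ r' o p = π / 2) :
    dist r' p > dist r p / 2 := by
  have hd : (0:ℝ) < dist o r := dist_pos.mpr (Ne.symm hr)
  have hsqrt3 : (1:ℝ) < Real.sqrt 3 := by
    nlinarith [Real.sq_sqrt (show (0:ℝ) ≤ 3 by norm_num), Real.sqrt_nonneg 3]
  -- right angle at o in triangle r' o p
  have hcos2 : Real.cos (∠ r' o p) = 0 := by rw [hangle₂]; exact Real.cos_pi_div_two
  have h1 : dist r' p ^ 2 = dist r' o ^ 2 + dist p o ^ 2 := by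
    have := EuclideanGeometry.law_cos r' o p
    rw [hcos2] at this; linarith
  have h2 : dist o r' ≤ dist r' p := by
    have hnn : (0:ℝ) ≤ dist r' p := dist_nonneg
    have hnn2 : (0:ℝ) ≤ dist r' o := dist_nonneg
    rw [dist_comm o r']
    nlinarith [sq_nonneg (dist p o)]
  -- |r r'| < |o r|
  have hθ0 : 0 ≤ ∠ r' o r := angle_nonneg _ _ _
  have hcos1 : Real.sqrt 3 / 2 ≤ Real.cos (∠ r' o r) := by
    have := Real.cos_le_cos_of_nonneg_of_le_pi hθ0
      (by linarith [Real.pi_pos] : π / 6 ≤ π) hangle₁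
    rwa [Real.cos_pi_div_six] at this
  have h3 := EuclideanGeometry.law_cos r' o r
  have hro : dist r' o = dist o r := by rw [dist_comm, ← hlen]
  have hro2 : dist r o = dist o r := by rw [dist_comm]
  have h4 : dist r' r < dist o r := by
    have hnn : (0:ℝ) ≤ dist r' r := dist_nonneg
    rw [hro, hro2] at h3
    nlinarith [h3, hcos1, hd, hsqrt3, mul_pos hd hd, hnn]
  have htri : dist r p ≤ dist r r' + dist r' p := dist_triangle r r' p
  have : dist r r' = dist r' r := dist_comm _ _
  have h5 : dist o r ≤ dist r' p := by rw [hlen]; exact h2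
  linarith
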